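/- Let ν ∈ (0,1] and φ(x) = ‖x‖^{ν+1}/(ν+1) on ℝ^m. Then the gradient map ∇φ(x) = ‖x‖^{ν-1} x (with ∇φ(0)=0) is Hölder continuous of order ν with constant 2^{1-ν}: for all x, x' ∈ ℝ^m, ‖∇φ(x') − ∇φ(x)‖ ≤ 2^{1-ν} ‖x' − x‖^ν. -/

import Mathlib

open Real Set

lemma rpow_subadd (a b p : ℝ) (ha : 0 ≤ a) (hb : 0 ≤ b) (hp : 0 ≤ p) (hp1 : p ≤ 1) :
    (a + b) ^ p ≤ a ^ p + b ^ p := by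
  have := NNReal.coe_le_coe.mpr (NNReal.rpow_add_le_add_rpow a.toNNReal b.toNNReal hp hp1)
  push_cast [NNReal.coe_rpow, Real.coe_toNNReal a ha, Real.coe_toNNReal b hb] at this
  exact this

lemma rpow_twopoint (a b p : ℝ) (ha : 0 ≤ a) (hb : 0 ≤ b) (hp : 0 ≤ p) (hp1 : p ≤ 1) :
    a ^ p + b ^ p ≤ 2 ^ (1 - p) * (a + b) ^ p := by
  have hc := (Real.concaveOn_rpow hp hp1).2 (mem_Ici.mpr ha) (mem_Ici.mpr hb)
      (by norm_num : (0:ℝ) ≤ 1/2) (by norm_num : (0:ℝ) ≤ 1/2) (by norm_num)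
  simp only [smul_eq_mul] at hc
  rw [show (1:ℝ)/2 * a + 1/2*b = (a+b)/2 by ring,
    Real.div_rpow (by linarith) (by norm_num)] at hc
  have h2p : (0:ℝ) < 2 ^ p := Real.rpow_pos_of_pos (by norm_num) p
  rw [show (2:ℝ) ^ (1 - p) = 2 / 2 ^ p by
    rw [Real.rpow_sub (by norm_num), Real.rpow_one], div_mul_eq_mul_div, le_div_iff₀ h2p]
  have := (le_div_iff₀ h2p).mp (by linarith : (a^p+b^p)/2 ≤ (a+b)^p/2^p)
  linarith

lemma sq_rpow (x ν : ℝ) (hx : 0 ≤ x) : (x^2)^ν = (x^ν)^2 := by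
  rw [← Real.rpow_natCast x 2, ← Real.rpow_mul hx, mul_comm, Real.rpow_mul hx,
    Real.rpow_natCast]

lemma key_ineq (ν r R u : ℝ) (hν : 0 < ν) (hν1 : ν ≤ 1) (hr : 0 < r) (hrR : r ≤ R)
    (h1 : (R-r)^2 ≤ u) (h2 : u ≤ (R+r)^2) :
    (R^ν)^2 + (r^ν)^2 - R^(ν-1)*r^(ν-1)*(R^2+r^2-u) ≤ ((2:ℝ)^(1-ν))^2 * u^ν := by
  have hR : 0 < R := lt_of_lt_of_le hr hrR
  have hRν : R^(ν-1)*R = R^ν := by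
    rw [← Real.rpow_add_one hR.ne' (ν-1), sub_add_cancel]
  have hrν : r^(ν-1)*r = r^ν := by
    rw [← Real.rpow_add_one hr.ne' (ν-1), sub_add_cancel]
  have hle : (R-r)^2 ≤ (R+r)^2 := by nlinarith
  obtain ⟨a, b, ha, hb, hab, hcomb⟩ := (Convex.mem_Icc hle).mp ⟨h1, h2⟩
  have hC : (0:ℝ) ≤ ((2:ℝ)^(1-ν))^2 := by positivity
  have h2ν : (1:ℝ) ≤ 2^(1-ν) := Real.one_le_rpow (by norm_num) (by linarith)
  have hRr0 : (0:ℝ) ≤ R - r := by linarith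
  -- endpoint 1
  have hsub : R^ν ≤ (R-r)^ν + r^ν := by
    have := rpow_subadd (R-r) r ν hRr0 hr.le hν.le hν1
    rwa [sub_add_cancel] at this
  have hmono : r^ν ≤ R^ν := Real.rpow_le_rpow hr.le hrR hν.le
  have hCge1 : (1:ℝ) ≤ ((2:ℝ)^(1-ν))^2 := by nlinarith
  have hE1 : (R^ν - r^ν)^2 ≤ ((2:ℝ)^(1-ν))^2 * ((R-r)^2)^ν := by
    rw [sq_rpow _ _ hRr0]
    have step1 : (R^ν - r^ν)^2 ≤ ((R-r)^ν)^2 :=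
      pow_le_pow_left₀ (sub_nonneg.2 hmono) (by linarith) 2
    exact step1.trans (le_mul_of_one_le_left (sq_nonneg _) hCge1)
  -- endpoint 2
  have hE2 : (R^ν + r^ν)^2 ≤ ((2:ℝ)^(1-ν))^2 * ((R+r)^2)^ν := by
    rw [sq_rpow _ _ (by linarith : (0:ℝ) ≤ R+r)]
    have h := rpow_twopoint R r ν hR.le hr.le hν.le hν1
    have h0 : (0:ℝ) ≤ R^ν + r^ν := by positivity
    calc (R^ν + r^ν)^2 ≤ ((2:ℝ)^(1-ν) * (R+r)^ν)^2 := pow_le_pow_left₀ h0 h 2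
      _ = ((2:ℝ)^(1-ν))^2 * ((R+r)^ν)^2 := by ring
  -- concavity
  have hconc := (Real.concaveOn_rpow hν.le hν1).2 (mem_Ici.mpr (sq_nonneg (R-r)))
      (mem_Ici.mpr (sq_nonneg (R+r))) ha hb hab
  simp only [smul_eq_mul] at hconc
  rw [hcomb] at hconc
  -- combine
  have hlin : (R^ν)^2 + (r^ν)^2 - R^(ν-1)*r^(ν-1)*(R^2+r^2-u)
      = a*(R^ν - r^ν)^2 + b*(R^ν + r^ν)^2 := by
    have hB : R^(ν-1)*r^(ν-1)*(2*R*r) = 2*(R^ν*r^ν) := by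
      calc R^(ν-1)*r^(ν-1)*(2*R*r) = 2*((R^(ν-1)*R)*(r^(ν-1)*r)) := by ring
        _ = 2*(R^ν*r^ν) := by rw [hRν, hrν]
    have hu : R^2+r^2-u = (a-b)*(2*R*r) := by
      linear_combination hcomb - (R^2+r^2)*hab
    rw [hu, show R^(ν-1)*r^(ν-1)*((a-b)*(2*R*r)) = (a-b)*(R^(ν-1)*r^(ν-1)*(2*R*r)) by ring,
      hB]
    linear_combination (-((R^ν)^2+(r^ν)^2))*hab
  rw [hlin]
  calc a*(R^ν - r^ν)^2 + b*(R^ν + r^ν)^2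
      ≤ a*(((2:ℝ)^(1-ν))^2 * ((R-r)^2)^ν) + b*(((2:ℝ)^(1-ν))^2 * ((R+r)^2)^ν) := by
        gcongr
    _ = ((2:ℝ)^(1-ν))^2 * (a*((R-r)^2)^ν + b*((R+r)^2)^ν) := by ring
    _ ≤ ((2:ℝ)^(1-ν))^2 * u^ν := by
        apply mul_le_mul_of_nonneg_left hconc hC

lemma stmt_2_onesided (m : ℕ) (ν : ℝ) (hν0 : 0 < ν) (hν1 : ν ≤ 1)
    (x x' : EuclideanSpace ℝ (Fin m)) (h : ‖x‖ ≤ ‖x'‖) :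
    ‖(‖x'‖ ^ (ν - 1)) • x' - (‖x‖ ^ (ν - 1)) • x‖ ≤ 2 ^ (1 - ν) * ‖x' - x‖ ^ ν := by
  have h2ν : (1:ℝ) ≤ 2^(1-ν) := Real.one_le_rpow (by norm_num) (by linarith)
  by_cases hx' : x' = 0
  · have hx : x = 0 := by
      rw [hx', norm_zero] at h
      exact norm_eq_zero.mp (le_antisymm h (norm_nonneg x))
    subst hx'; subst hx
    simp only [smul_zero, sub_zero, norm_zero]
    positivity
  by_cases hx : x = 0
  · subst hx
    simp only [smul_zero, sub_zero, norm_zero]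
    have hR : 0 < ‖x'‖ := norm_pos_iff.mpr hx'
    rw [norm_smul, Real.norm_eq_abs, abs_of_nonneg (Real.rpow_nonneg (norm_nonneg x') _),
      ← Real.rpow_add_one hR.ne' (ν-1), sub_add_cancel]
    calc ‖x'‖ ^ ν = 1 * ‖x'‖ ^ ν := (one_mul _).symm
      _ ≤ 2 ^ (1-ν) * ‖x'‖ ^ ν := by
          apply mul_le_mul_of_nonneg_right h2ν (Real.rpow_nonneg (norm_nonneg _) _)
  -- main case
  have hr : 0 < ‖x‖ := norm_pos_iff.mpr hx
  have hR : 0 < ‖x'‖ := norm_pos_iff.mpr hx'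
  set r := ‖x‖ with hrdef
  set R := ‖x'‖ with hRdef
  have hRν : R^(ν-1)*R = R^ν := by
    rw [← Real.rpow_add_one hR.ne' (ν-1), sub_add_cancel]
  have hrν : r^(ν-1)*r = r^ν := by
    rw [← Real.rpow_add_one hr.ne' (ν-1), sub_add_cancel]
  have h1 : (R - r)^2 ≤ ‖x' - x‖^2 := by
    have e1 := abs_norm_sub_norm_le x' x
    have e2 := mul_self_le_mul_self (abs_nonneg (‖x'‖ - ‖x‖)) e1
    rw [abs_mul_abs_self] at e2
    nlinarith [e2]
  have h2 : ‖x' - x‖^2 ≤ (R + r)^2 := by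
    have e1 := norm_sub_le x' x
    have := pow_le_pow_left₀ (norm_nonneg (x' - x)) e1 2
    simpa using this
  have hkey := key_ineq ν r R (‖x' - x‖^2) hν0 hν1 hr h h1 h2
  -- expand the squared norm
  have hinner : (2:ℝ) * inner ℝ x' x = R^2 + r^2 - ‖x' - x‖^2 := by
    have := norm_sub_sq_real x' x
    linarith
  have hexp : ‖(R ^ (ν - 1)) • x' - (r ^ (ν - 1)) • x‖^2
      = (R^ν)^2 + (r^ν)^2 - R^(ν-1)*r^(ν-1)*(R^2 + r^2 - ‖x' - x‖^2) := by
    rw [norm_sub_sq_real, real_inner_smul_left, real_inner_smul_right,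
      norm_smul, norm_smul, Real.norm_eq_abs, Real.norm_eq_abs,
      abs_of_nonneg (Real.rpow_nonneg (norm_nonneg x') _),
      abs_of_nonneg (Real.rpow_nonneg (norm_nonneg x) _)]
    rw [← hinner]
    have : (R ^ (ν-1) * R)^2 = (R^ν)^2 := by rw [hRν]
    have h' : (r ^ (ν-1) * r)^2 = (r^ν)^2 := by rw [hrν]
    nlinarith [this, h']
  have hsq : ‖(R ^ (ν - 1)) • x' - (r ^ (ν - 1)) • x‖^2 ≤ (2 ^ (1-ν) * ‖x' - x‖ ^ ν)^2 := by
    rw [hexp]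
    calc _ ≤ ((2:ℝ)^(1-ν))^2 * (‖x' - x‖^2)^ν := hkey
      _ = (2 ^ (1-ν) * ‖x' - x‖ ^ ν)^2 := by
          rw [sq_rpow _ _ (norm_nonneg _)]; ring
  have hnn : (0:ℝ) ≤ 2 ^ (1-ν) * ‖x' - x‖ ^ ν := by positivity
  exact (pow_le_pow_iff_left₀ (norm_nonneg _) hnn two_ne_zero).mp hsq



/-- For `ν ∈ (0,1]`, the gradient map `x ↦ ‖x‖^{ν-1} • x` of `φ(x) = ‖x‖^{ν+1}/(ν+1)`
(with value `0` at `0`) is Hölder continuous of order `ν` with constant `2^{1-ν}`. -/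
theorem stmt_2 (m : ℕ) (ν : ℝ) (hν : ν ∈ Set.Ioc (0 : ℝ) 1) :
    ∀ x x' : EuclideanSpace ℝ (Fin m),
      ‖(‖x'‖ ^ (ν - 1)) • x' - (‖x‖ ^ (ν - 1)) • x‖ ≤ 2 ^ (1 - ν) * ‖x' - x‖ ^ ν := by
  obtain ⟨hν0, hν1⟩ := hν
  intro x x'
  rcases le_total ‖x‖ ‖x'‖ with h | h
  · exact stmt_2_onesided m ν hν0 hν1 x x' h
  · have := stmt_2_onesided m ν hν0 hν1 x' x h
    rw [norm_sub_rev, norm_sub_rev x x'] at this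
    exact this
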